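/- Let n ≥ 4 and k an integer. There exists an (n+1)×2 integer matrix P with Pᵀ·diag(Iₙ, -1)·P = k·I₂ if and only if k ≥ 0, where diag(Iₙ, -1) is the diagonal matrix with n diagonal entries 1 followed by one entry -1. (This is the algebraic content of: there is a degree k map f: (ℂP²)^{♯n}♯(ℂP²-bar) → ℂP²♯ℂP², n ≥ 4, if and only if k ≥ 0.) -/

import Mathlib

open Matrix

private lemma sum_first_four {n : ℕ} (hn : 4 ≤ n) (f : Fin (n + 1) → ℤ)
    (hf : ∀ m : Fin (n + 1), 4 ≤ (m : ℕ) → f m = 0) :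
    ∑ m, f m = f ⟨0, by omega⟩ + f ⟨1, by omega⟩ + f ⟨2, by omega⟩ + f ⟨3, by omega⟩ := by
  set i0 : Fin (n + 1) := ⟨0, by omega⟩
  set i1 : Fin (n + 1) := ⟨1, by omega⟩
  set i2 : Fin (n + 1) := ⟨2, by omega⟩
  set i3 : Fin (n + 1) := ⟨3, by omega⟩
  have hsub : ({i0, i1, i2, i3} : Finset (Fin (n + 1))) ⊆ Finset.univ := Finset.subset_univ _
  have key := Finset.sum_subset hsub (fun x _ hx => hf x (by
    simp only [Finset.mem_insert, Finset.mem_singleton, not_or] at hx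
    obtain ⟨h1, h2, h3, h4⟩ := hx
    have k1 : (x : ℕ) ≠ 0 := fun h => h1 (Fin.ext h)
    have k2 : (x : ℕ) ≠ 1 := by simpa [i1, Fin.ext_iff] using h2
    have k3 : (x : ℕ) ≠ 2 := by simpa [i2, Fin.ext_iff] using h3
    have k4 : (x : ℕ) ≠ 3 := by simpa [i3, Fin.ext_iff] using h4
    omega))
  rw [← key]
  have e01 : i0 ≠ i1 := by simp [i0, i1, Fin.ext_iff]
  have e02 : i0 ≠ i2 := by simp [i0, i2, Fin.ext_iff]
  have e03 : i0 ≠ i3 := by simp [i0, i3, Fin.ext_iff]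
  have e12 : i1 ≠ i2 := by simp [i1, i2, Fin.ext_iff]
  have e13 : i1 ≠ i3 := by simp [i1, i3, Fin.ext_iff]
  have e23 : i2 ≠ i3 := by simp [i2, i3, Fin.ext_iff]
  rw [Finset.sum_insert (by simp [e01, e02, e03]),
      Finset.sum_insert (by simp [e12, e13]),
      Finset.sum_insert (by simp [e23]), Finset.sum_singleton]
  ring

theorem degree_cp2_n_cp2bar_to_cp2_two {n : ℕ} (hn : 4 ≤ n) (k : ℤ) :
    (∃ P : Matrix (Fin (n + 1)) (Fin 2) ℤ,
        Pᵀ * Matrix.diagonal (fun i : Fin (n + 1) => if (i : ℕ) < n then (1 : ℤ) else -1) * P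
          = k • (1 : Matrix (Fin 2) (Fin 2) ℤ)) ↔
      0 ≤ k := by
  set d : Fin (n + 1) → ℤ := fun i => if (i : ℕ) < n then (1 : ℤ) else -1 with hd
  have hentry : ∀ (P : Matrix (Fin (n + 1)) (Fin 2) ℤ) (i j : Fin 2),
      (Pᵀ * Matrix.diagonal d * P) i j = ∑ m : Fin (n + 1), P m i * d m * P m j := by
    intro P i j
    rw [Matrix.mul_apply]
    simp only [Matrix.mul_diagonal, Matrix.transpose_apply]
  constructor
  · rintro ⟨P, hP⟩
    have heq : ∀ i j : Fin 2,
        (∑ m : Fin (n + 1), P m i * d m * P m j) = k * (if i = j then 1 else 0) := by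
      intro i j
      rw [← hentry P i j, hP]
      simp [Matrix.smul_apply, Matrix.one_apply, mul_ite, mul_one, mul_zero]
    have hsplit : ∀ i j : Fin 2,
        (∑ m : Fin (n + 1), P m i * d m * P m j) =
          (∑ m : Fin n, P m.castSucc i * P m.castSucc j) -
            P (Fin.last n) i * P (Fin.last n) j := by
      intro i j
      rw [Fin.sum_univ_castSucc]
      have hlast : d (Fin.last n) = -1 := by simp [hd]
      have hcast : ∀ m : Fin n, d m.castSucc = 1 := by
        intro m; simp [hd, m.isLt]
      simp only [hlast, hcast]
      ring_nf
    have h00 := heq 0 0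
    have h11 := heq 1 1
    have h01 := heq 0 1
    rw [hsplit] at h00 h11 h01
    norm_num at h00 h11 h01
    set a := P (Fin.last n) 0 with ha
    set b := P (Fin.last n) 1 with hb
    set A := ∑ m : Fin n, P m.castSucc 0 * P m.castSucc 0 with hA'
    set B := ∑ m : Fin n, P m.castSucc 1 * P m.castSucc 1 with hB'
    set C := ∑ m : Fin n, P m.castSucc 0 * P m.castSucc 1 with hC'
    have hA : 0 ≤ A := Finset.sum_nonneg fun m _ => mul_self_nonneg _
    have hB : 0 ≤ B := Finset.sum_nonneg fun m _ => mul_self_nonneg _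
    have hCS : C * C ≤ A * B := by
      have := Finset.sum_mul_sq_le_sq_mul_sq Finset.univ
        (fun m : Fin n => P m.castSucc 0) (fun m : Fin n => P m.castSucc 1)
      simpa [sq, hA', hB', hC'] using this
    -- h00 : A - a * a = k, h11 : B - b * b = k, h01 : C - a * b = 0
    by_contra hk
    push_neg at hk
    have ha2 : -k ≤ a * a := by linarith
    have hb2 : -k ≤ b * b := by linarith
    have hA2 : A = a * a + k := by linarith
    have hB2 : B = b * b + k := by linarith
    have hC2 : C = a * b := by linarith
    rw [hA2, hB2, hC2] at hCS
    have hkey : 0 ≤ k * (a * a + b * b + k) := by nlinarith [hCS]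
    have ht : a * a + b * b + k ≤ 0 := by
      by_contra htpos
      push_neg at htpos
      have := mul_neg_of_neg_of_pos hk htpos
      linarith
    linarith
  · intro hk
    obtain ⟨a, b, c, e, habce⟩ := Nat.sum_four_squares k.toNat
    have hsum : (a : ℤ) ^ 2 + (b : ℤ) ^ 2 + (c : ℤ) ^ 2 + (e : ℤ) ^ 2 = k := by
      have := congrArg (fun x : ℕ => (x : ℤ)) habce
      push_cast at this
      rw [this, Int.toNat_of_nonneg hk]
    set P : Matrix (Fin (n + 1)) (Fin 2) ℤ := Matrix.of fun m i =>
      if (m : ℕ) = 0 then (if i = 0 then (a : ℤ) else -(b : ℤ))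
      else if (m : ℕ) = 1 then (if i = 0 then (b : ℤ) else (a : ℤ))
      else if (m : ℕ) = 2 then (if i = 0 then (c : ℤ) else (e : ℤ))
      else if (m : ℕ) = 3 then (if i = 0 then (e : ℤ) else -(c : ℤ))
      else 0 with hPdef
    refine ⟨P, ?_⟩
    ext i j
    rw [hentry P i j]
    have hzero : ∀ m : Fin (n + 1), 4 ≤ (m : ℕ) → P m i * d m * P m j = 0 := by
      intro m hm
      have h0 : P m i = 0 := by
        simp only [hPdef, Matrix.of_apply]
        rw [if_neg (by omega), if_neg (by omega), if_neg (by omega), if_neg (by omega)]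
      rw [h0, zero_mul, zero_mul]
    rw [sum_first_four hn _ hzero]
    have hd0 : d ⟨0, by omega⟩ = 1 := by simp only [hd]; exact if_pos (by omega)
    have hd1 : d ⟨1, by omega⟩ = 1 := by simp only [hd]; exact if_pos (by omega)
    have hd2 : d ⟨2, by omega⟩ = 1 := by simp only [hd]; exact if_pos (by omega)
    have hd3 : d ⟨3, by omega⟩ = 1 := by simp only [hd]; exact if_pos (by omega)
    rw [hd0, hd1, hd2, hd3]
    have hP0 : ∀ i : Fin 2, P ⟨0, by omega⟩ i = if i = 0 then (a : ℤ) else -(b : ℤ) := by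
      intro i; simp [hPdef]
    have hP1 : ∀ i : Fin 2, P ⟨1, by omega⟩ i = if i = 0 then (b : ℤ) else (a : ℤ) := by
      intro i; simp [hPdef]
    have hP2 : ∀ i : Fin 2, P ⟨2, by omega⟩ i = if i = 0 then (c : ℤ) else (e : ℤ) := by
      intro i; simp [hPdef]
    have hP3 : ∀ i : Fin 2, P ⟨3, by omega⟩ i = if i = 0 then (e : ℤ) else -(c : ℤ) := by
      intro i; simp [hPdef]
    rw [hP0, hP0, hP1, hP1, hP2, hP2, hP3, hP3]
    fin_cases i <;> fin_cases j <;>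
      simp [Matrix.smul_apply, Matrix.one_apply] <;>
      [skip; ring; ring; skip] <;> linear_combination hsum
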